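/- Let p ≥ 1 be an integer and let μ : ℕ → ℝ be a nonnegative sequence satisfying μ (k+1) + (μ (k+1))^((p+1)/p) ≤ μ k for all k ≥ 0. Then for all k ≥ 1: μ k ≤ ((1 + p)·(1 + (μ 0)^(1/p)))^p / k^p. -/

import Mathlib

/-- Lemma A.1 of Nesterov (with α = 1/p): a nonnegative sequence satisfying
`μ (k+1) + μ (k+1)^((p+1)/p) ≤ μ k` decays like `O(k^(−p))`. -/
theorem nesterov_recurrence_rate
    (p : ℕ) (hp : 1 ≤ p) (μ : ℕ → ℝ) (hnn : ∀ k : ℕ, 0 ≤ μ k)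
    (hrec : ∀ k : ℕ, μ (k + 1) + μ (k + 1) ^ (((p : ℝ) + 1) / p) ≤ μ k) :
    ∀ k : ℕ, 1 ≤ k →
      μ k ≤ ((1 + (p : ℝ)) * (1 + μ 0 ^ (1 / (p : ℝ)))) ^ p / (k : ℝ) ^ p := by
  have hp0 : (0:ℝ) < p := by exact_mod_cast Nat.lt_of_lt_of_le Nat.zero_lt_one hp
  set α : ℝ := 1 / (p:ℝ) with hα
  have hα0 : 0 < α := by positivity
  set ν : ℕ → ℝ := fun k => μ k ^ α with hν
  have hνnn : ∀ k, 0 ≤ ν k := fun k => Real.rpow_nonneg (hnn k) _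
  have hdec : ∀ k, μ (k+1) ≤ μ k := by
    intro k
    have h := hrec k
    have h2 : 0 ≤ μ (k+1) ^ (((p:ℝ)+1)/p) := Real.rpow_nonneg (hnn _) _
    linarith
  have hle0 : ∀ k, μ k ≤ μ 0 := by
    intro k
    induction k with
    | zero => exact le_rfl
    | succ k ih => exact (hdec k).trans ih
  have hstep : ∀ k, μ (k+1) * (1 + ν (k+1)) ≤ μ k := by
    intro k
    have he : ((p:ℝ)+1)/p = 1 + α := by rw [hα]; field_simp
    have h1 : μ (k+1) ^ (((p:ℝ)+1)/p) = μ (k+1) * ν (k+1) := by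
      rw [he, Real.rpow_add' (hnn _) (by positivity), Real.rpow_one]
    have h := hrec k
    rw [h1] at h
    nlinarith [hnn (k+1), hνnn (k+1)]
  set B : ℝ := (1 + (p:ℝ)) * (1 + ν 0) with hB
  have hBpos : 0 < B := by nlinarith [hνnn 0]
  have main : ∀ k, μ k ≠ 0 → (k:ℝ)/B ≤ (ν k)⁻¹ := by
    intro k
    induction k with
    | zero =>
      intro hne
      simp only [Nat.cast_zero, zero_div]
      exact inv_nonneg.mpr (hνnn 0)
    | succ k ih =>
      intro hne
      have hμk1pos : 0 < μ (k+1) := (hnn _).lt_of_ne (Ne.symm hne)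
      have hμkpos : 0 < μ k := lt_of_lt_of_le hμk1pos (hdec k)
      set t := ν (k+1) with htdef
      have htpos : 0 < t := Real.rpow_pos_of_pos hμk1pos _
      have hνkpos : 0 < ν k := Real.rpow_pos_of_pos hμkpos _
      have htν0 : t ≤ ν 0 := Real.rpow_le_rpow (hnn _) (hle0 (k+1)) hα0.le
      have h1t : (0:ℝ) < 1 + t := by linarith
      set u : ℝ := (1 + t) ^ (-α) with hu
      have hupos : 0 < u := Real.rpow_pos_of_pos h1t _
      have hup : u ^ p = (1 + t)⁻¹ := by
        rw [hu, ← Real.rpow_natCast ((1+t) ^ (-α)) p, ← Real.rpow_mul h1t.le]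
        have he : -α * p = -1 := by rw [hα]; field_simp
        rw [he, Real.rpow_neg_one]
      -- ν k ≥ t / u
      have hkey : t / u ≤ ν k := by
        have h2 : (μ (k+1) * (1+t)) ^ α ≤ (μ k) ^ α :=
          Real.rpow_le_rpow (by positivity) (hstep k) hα0.le
        rw [Real.mul_rpow (hnn _) h1t.le] at h2
        have h3 : (1+t) ^ α = u⁻¹ := by
          rw [hu, ← Real.rpow_neg h1t.le, neg_neg]
        rw [h3] at h2
        calc t / u = t * u⁻¹ := div_eq_mul_inv t u
        _ = μ (k+1) ^ α * u⁻¹ := by rw [htdef]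
        _ ≤ μ k ^ α := h2
      -- Bernoulli
      have hbern : 1 + (p:ℝ) * (u - 1) ≤ u ^ p := by
        have h := one_add_mul_le_pow (a := u - 1) (by linarith) p
        simpa using h
      rw [hup] at hbern
      have h4 : t ≤ (p:ℝ) * (1 - u) * (1 + t) := by
        have h5 : (1 + (p:ℝ) * (u - 1)) * (1 + t) ≤ 1 := by
          have := mul_le_mul_of_nonneg_right hbern h1t.le
          rwa [inv_mul_cancel₀ h1t.ne'] at this
        nlinarith
      have hu1 : u ≤ 1 := by nlinarith [mul_pos hp0 h1t]
      have h5 : (p:ℝ) * (1 + t) ≤ B := by nlinarith [hνnn 0]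
      have h6 : t / B ≤ 1 - u := by
        rw [div_le_iff₀ hBpos]
        nlinarith
      have ihv : (k:ℝ)/B ≤ (ν k)⁻¹ := ih hμkpos.ne'
      have h7 : (ν k)⁻¹ ≤ u / t := by
        have : t / u ≤ ν k := hkey
        have h8 : (ν k)⁻¹ ≤ (t/u)⁻¹ := by
          apply inv_anti₀ (by positivity) hkey
        rwa [inv_div] at h8
      have h9 : (1:ℝ)/B ≤ (1-u)/t := by
        rw [div_le_div_iff₀ hBpos htpos]
        nlinarith
      have : ((k:ℝ)+1)/B ≤ u/t + (1-u)/t := by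
        have : ((k:ℝ)+1)/B = (k:ℝ)/B + 1/B := by ring
        rw [this]
        exact add_le_add (ihv.trans h7) h9
      calc ((k+1 : ℕ):ℝ)/B = ((k:ℝ)+1)/B := by push_cast; ring
      _ ≤ u/t + (1-u)/t := this
      _ = t⁻¹ := by field_simp; ring
  -- conclude
  intro k hk
  by_cases hzero : μ k = 0
  · rw [hzero]
    positivity
  · have hμkpos : 0 < μ k := (hnn k).lt_of_ne (Ne.symm hzero)
    have hνkpos : 0 < ν k := Real.rpow_pos_of_pos hμkpos _
    have hkpos : (0:ℝ) < k := by exact_mod_cast hk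
    have h1 : (k:ℝ)/B ≤ (ν k)⁻¹ := main k hzero
    have h2 : ν k ≤ B / k := by
      have ha := mul_le_mul_of_nonneg_left h1 hνkpos.le
      rw [mul_inv_cancel₀ hνkpos.ne'] at ha
      rw [le_div_iff₀ hkpos]
      have hb := mul_le_mul_of_nonneg_right ha hBpos.le
      rw [one_mul, mul_assoc, div_mul_cancel₀ _ hBpos.ne'] at hb
      exact hb
    have h3 : μ k = ν k ^ p := by
      rw [hν, ← Real.rpow_natCast (μ k ^ α) p, ← Real.rpow_mul (hnn k)]
      have : α * p = 1 := by rw [hα]; field_simp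
      rw [this, Real.rpow_one]
    rw [h3]
    calc ν k ^ p ≤ (B/(k:ℝ)) ^ p := pow_le_pow_left₀ (hνnn k) h2 p
    _ = B ^ p / (k:ℝ) ^ p := div_pow B _ p
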